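/- Let P ⊆ ℂ be a continuum, let a, b ∈ ℂ and δ > 0 be such that closure(B_δ(a)) ∩ closure(B_δ(b)) = ∅, and suppose P intersects both circles ∂B_δ(a) and ∂B_δ(b). Then P \ (B_δ(a) ∪ B_δ(b)) has a connected component that intersects both ∂B_δ(a) and ∂B_δ(b). -/
import Mathlib


open Metric Set Filter Topology

noncomputable section

/-- A Jordan curve: a subset of `ℂ` homeomorphic to the unit circle. -/
def JordanCurve (J : Set ℂ) : Prop :=
  Nonempty (J ≃ₜ (Metric.sphere (0 : ℂ) 1))

/-- `A` is a connected component of the set `S`. -/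
def IsComponentOf (A S : Set ℂ) : Prop :=
  ∃ z ∈ S, A = connectedComponentIn S z

/-- Convergence of a sequence of sets in Hausdorff distance. -/
def HausdorffConv (P : ℕ → Set ℂ) (Q : Set ℂ) : Prop :=
  Filter.Tendsto (fun n => Metric.hausdorffDist (P n) Q) Filter.atTop (nhds 0)

/-- The Schönflies relation `R_K` on a compactum `K ⊆ ℂ`: `x R_K y` iff `x = y` or
there exist disjoint Jordan curves `J₁ ∋ x`, `J₂ ∋ y` such that, for the component `U`
of the complement of `J₁ ∪ J₂` whose frontier is `J₁ ∪ J₂`, the set `closure U ∩ K`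
has an infinite sequence of pairwise distinct components `P n`, each meeting both `J₁`
and `J₂`, converging in Hausdorff distance to a compact set `P∞` containing `x` and `y`. -/
def SchRel (K : Set ℂ) (x y : ℂ) : Prop :=
  x = y ∨
  ∃ J₁ J₂ : Set ℂ, JordanCurve J₁ ∧ JordanCurve J₂ ∧ Disjoint J₁ J₂ ∧
    x ∈ J₁ ∧ y ∈ J₂ ∧
    ∃ U : Set ℂ, IsComponentOf U (J₁ ∪ J₂)ᶜ ∧ frontier U = J₁ ∪ J₂ ∧
      ∃ P : ℕ → Set ℂ,
        (∀ n, IsComponentOf (P n) (closure U ∩ K)) ∧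
        (∀ m n, m ≠ n → P m ≠ P n) ∧
        (∀ n, (P n ∩ J₁).Nonempty) ∧
        (∀ n, (P n ∩ J₂).Nonempty) ∧
        ∃ Pinf : Set ℂ, IsCompact Pinf ∧ HausdorffConv P Pinf ∧ x ∈ Pinf ∧ y ∈ Pinf

/-- The graph of the Schönflies relation, as a subset of `K × K ⊆ ℂ × ℂ`. -/
def SchRelGraph (K : Set ℂ) : Set (ℂ × ℂ) :=
  {p : ℂ × ℂ | p.1 ∈ K ∧ p.2 ∈ K ∧ SchRel K p.1 p.2}

/-- The fiber at `x` of the closure (in `K × K`) of the Schönflies relation. -/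
def schFiber (K : Set ℂ) (x : ℂ) : Set ℂ :=
  {y : ℂ | (x, y) ∈ closure (SchRelGraph K)}

/-- `E` is an equivalence relation on `K` whose graph is closed in `K × K`. -/
def IsClosedEquivOn (K : Set ℂ) (E : ℂ → ℂ → Prop) : Prop :=
  (∀ x ∈ K, E x x) ∧
  (∀ x y, x ∈ K → y ∈ K → E x y → E y x) ∧
  (∀ x y z, x ∈ K → y ∈ K → z ∈ K → E x y → E y z → E x z) ∧
  IsClosed {p : ℂ × ℂ | p.1 ∈ K ∧ p.2 ∈ K ∧ E p.1 p.2}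

/-- The Schönflies equivalence `∼_K`: the smallest equivalence relation on `K`
containing `R_K` whose graph is closed in `K × K`, realized as the intersection of
all such equivalence relations. -/
def SchEquiv (K : Set ℂ) (x y : ℂ) : Prop :=
  ∀ E : ℂ → ℂ → Prop, IsClosedEquivOn K E →
    (∀ a b, a ∈ K → b ∈ K → SchRel K a b → E a b) → E x y

/-- The `∼_K`-equivalence class (atom of `K`) of a point `x`. -/
def schClass (K : Set ℂ) (x : ℂ) : Set ℂ :=
  {y : ℂ | y ∈ K ∧ SchEquiv K x y}

/-- A continuous map `f : ℂ → ℂ` is confluent if every connected component of the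
preimage of a continuum `B` is mapped onto `B`. -/
def Confluent (f : ℂ → ℂ) : Prop :=
  ∀ B : Set ℂ, IsCompact B → IsConnected B →
    ∀ A : Set ℂ, IsComponentOf A (f ⁻¹' B) → f '' A = B

/-- cut-wire consequence for a continuum meeting two disjoint circles. -/
theorem cut_wire_component (P : Set ℂ) (hP : IsCompact P) (hPc : IsConnected P)
    (a b : ℂ) (δ : ℝ) (hδ : 0 < δ)
    (hdisj : closure (Metric.ball a δ) ∩ closure (Metric.ball b δ) = ∅)
    (ha : (P ∩ Metric.sphere a δ).Nonempty) (hb : (P ∩ Metric.sphere b δ).Nonempty) :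
    ∃ Q : Set ℂ, IsComponentOf Q (P \ (Metric.ball a δ ∪ Metric.ball b δ)) ∧
      (Q ∩ Metric.sphere a δ).Nonempty ∧ (Q ∩ Metric.sphere b δ).Nonempty := by
  by_contra hcon
  push_neg at hcon
  set K : Set ℂ := P \ (Metric.ball a δ ∪ Metric.ball b δ) with hKdef
  have hKcomp : IsCompact K := hP.diff (isOpen_ball.union isOpen_ball)
  have hcla : closure (Metric.ball a δ) = Metric.closedBall a δ := closure_ball a hδ.ne'
  have hclb : closure (Metric.ball b δ) = Metric.closedBall b δ := closure_ball b hδ.ne'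
  have hsa_nb : ∀ x ∈ Metric.sphere a δ, x ∉ closure (Metric.ball b δ) := by
    intro x hx hxb
    have : x ∈ closure (Metric.ball a δ) := by
      rw [hcla]; exact sphere_subset_closedBall hx
    exact absurd (Set.mem_inter this hxb) (by rw [hdisj]; exact notMem_empty x)
  have hsb_na : ∀ x ∈ Metric.sphere b δ, x ∉ closure (Metric.ball a δ) := by
    intro x hx hxa
    have : x ∈ closure (Metric.ball b δ) := by
      rw [hclb]; exact sphere_subset_closedBall hx
    exact absurd (Set.mem_inter hxa this) (by rw [hdisj]; exact notMem_empty x)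
  have hSaK : P ∩ Metric.sphere a δ ⊆ K := by
    rintro x ⟨hxP, hxs⟩
    refine ⟨hxP, ?_⟩
    rintro (hxa | hxb)
    · exact absurd (mem_sphere.mp hxs) (by simpa using (mem_ball.mp hxa).ne)
    · exact hsa_nb x hxs (subset_closure hxb)
  have hSbK : P ∩ Metric.sphere b δ ⊆ K := by
    rintro x ⟨hxP, hxs⟩
    refine ⟨hxP, ?_⟩
    rintro (hxa | hxb)
    · exact hsb_na x hxs (subset_closure hxa)
    · exact absurd (mem_sphere.mp hxs) (by simpa using (mem_ball.mp hxb).ne)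
  haveI : CompactSpace K := isCompact_iff_compactSpace.mp hKcomp
  set A' : Set K := Subtype.val ⁻¹' (Metric.sphere a δ) with hA'def
  set B' : Set K := Subtype.val ⁻¹' (Metric.sphere b δ) with hB'def
  have hA'closed : IsClosed A' := isClosed_sphere.preimage continuous_subtype_val
  have hB'closed : IsClosed B' := isClosed_sphere.preimage continuous_subtype_val
  -- each point of A' has a clopen neighborhood disjoint from B'
  have key : ∀ x ∈ A', ∃ C : Set K, IsClopen C ∧ x ∈ C ∧ C ∩ B' = ∅ := by
    intro x hx
    have hcomp : connectedComponent x ∩ B' = ∅ := by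
      by_contra hne
      obtain ⟨y, hyc, hyB⟩ := Set.nonempty_iff_ne_empty.mpr hne
      have hQ : IsComponentOf (connectedComponentIn K (x : ℂ)) K := ⟨x, x.2, rfl⟩
      have himg : connectedComponentIn K (x : ℂ) = Subtype.val '' connectedComponent x := by
        rw [connectedComponentIn_eq_image x.2]
      have hya : ((y : ℂ) ∈ connectedComponentIn K (x : ℂ)) := by
        rw [himg]; exact ⟨y, hyc, rfl⟩
      have h1 : (connectedComponentIn K (x : ℂ) ∩ Metric.sphere a δ).Nonempty :=
        ⟨x, mem_connectedComponentIn x.2, hx⟩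
      have h2 : (connectedComponentIn K (x : ℂ) ∩ Metric.sphere b δ).Nonempty :=
        ⟨y, hya, hyB⟩
      rw [hcon _ hQ h1] at h2
      exact h2.ne_empty rfl
    rw [connectedComponent_eq_iInter_isClopen x] at hcomp
    have hBcomp : IsCompact B' := hB'closed.isCompact
    have hinter : (B' ∩ ⋂ s : { s : Set K // IsClopen s ∧ x ∈ s }, s) = ∅ := by
      rw [Set.inter_comm]; exact hcomp
    obtain ⟨t, ht⟩ := hBcomp.elim_finite_subfamily_closed
      (fun s : { s : Set K // IsClopen s ∧ x ∈ s } => (s : Set K))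
      (fun s => s.2.1.1) hinter
    refine ⟨⋂ i ∈ t, (i : Set K), isClopen_biInter_finset fun i _ => i.2.1, ?_, ?_⟩
    · exact Set.mem_iInter₂.mpr fun i _ => i.2.2
    · rw [Set.inter_comm]; exact ht
  choose! C hCclopen hCmem hCdisj using key
  -- cover A' by finitely many such clopens
  have hA'comp : IsCompact A' := hA'closed.isCompact
  have hcover : A' ⊆ ⋃ x ∈ A', C x := fun x hx =>
    Set.mem_biUnion hx (hCmem x hx)
  obtain ⟨t, hts, htfin, htcover⟩ := hA'comp.elim_finite_subcover_image
    (fun x hx => (hCclopen x hx).2) hcover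
  set V : Set K := ⋃ x ∈ t, C x with hVdef
  have hVclopen : IsClopen V := by
    exact Set.Finite.isClopen_biUnion htfin fun i hi => hCclopen i (hts hi)
  have hAV : A' ⊆ V := htcover
  have hVB : V ∩ B' = ∅ := by
    apply Set.eq_empty_of_subset_empty
    rintro z ⟨hzV, hzB⟩
    obtain ⟨i, hi, hzi⟩ := Set.mem_iUnion₂.mp hzV
    rw [← hCdisj i (hts hi)]
    exact ⟨hzi, hzB⟩
  -- push to ℂ
  set X₁ : Set ℂ := Subtype.val '' V with hX1def
  set X₂ : Set ℂ := Subtype.val '' Vᶜ with hX2def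
  have hX1closed : IsClosed X₁ :=
    (hVclopen.isClosed.isCompact.image continuous_subtype_val).isClosed
  have hX2closed : IsClosed X₂ :=
    ((hVclopen.compl.isClosed).isCompact.image continuous_subtype_val).isClosed
  have hX1K : X₁ ⊆ K := by rintro _ ⟨z, _, rfl⟩; exact z.2
  have hX2K : X₂ ⊆ K := by rintro _ ⟨z, _, rfl⟩; exact z.2
  set F₁ : Set ℂ := X₁ ∪ (P ∩ closure (Metric.ball a δ)) with hF1def
  set F₂ : Set ℂ := X₂ ∪ (P ∩ closure (Metric.ball b δ)) with hF2def
  have hF1closed : IsClosed F₁ := hX1closed.union (hP.isClosed.inter isClosed_closure)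
  have hF2closed : IsClosed F₂ := hX2closed.union (hP.isClosed.inter isClosed_closure)
  have hPcover : P ⊆ F₁ ∪ F₂ := by
    intro p hp
    by_cases hpa : p ∈ Metric.ball a δ
    · exact Or.inl (Or.inr ⟨hp, subset_closure hpa⟩)
    by_cases hpb : p ∈ Metric.ball b δ
    · exact Or.inr (Or.inr ⟨hp, subset_closure hpb⟩)
    have hpK : p ∈ K := ⟨hp, by rintro (h | h) <;> [exact hpa h; exact hpb h]⟩
    by_cases hpv : (⟨p, hpK⟩ : K) ∈ V
    · exact Or.inl (Or.inl ⟨⟨p, hpK⟩, hpv, rfl⟩)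
    · exact Or.inr (Or.inl ⟨⟨p, hpK⟩, hpv, rfl⟩)
  -- disjointness on P
  have hdisjF : P ∩ (F₁ ∩ F₂) = ∅ := by
    apply Set.eq_empty_of_subset_empty
    rintro p ⟨hpP, hp1, hp2⟩
    rcases hp1 with hp1 | hp1 <;> rcases hp2 with hp2 | hp2
    · obtain ⟨z, hz, rfl⟩ := hp1
      obtain ⟨w, hw, hwz⟩ := hp2
      rw [Subtype.val_injective hwz] at hw
      exact hw hz
    · -- p ∈ X₁ and p ∈ closure ball b : then p ∈ sphere b, contradiction with hVB
      obtain ⟨z, hz, rfl⟩ := hp1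
      have hznb : (z : ℂ) ∉ Metric.ball b δ := fun h => z.2.2 (Or.inr h)
      have hzs : (z : ℂ) ∈ Metric.sphere b δ := by
        have := hp2.2
        rw [hclb] at this
        rcases lt_or_eq_of_le (mem_closedBall.mp this) with h | h
        · exact absurd (mem_ball.mpr h) hznb
        · exact mem_sphere.mpr h
      have : z ∈ V ∩ B' := ⟨hz, hzs⟩
      rw [hVB] at this
      exact this
    · -- p ∈ closure ball a and p ∈ X₂ : p ∈ sphere a so ⟨p⟩ ∈ A' ⊆ V, contra
      obtain ⟨z, hz, rfl⟩ := hp2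
      have hzna : (z : ℂ) ∉ Metric.ball a δ := fun h => z.2.2 (Or.inl h)
      have hzs : (z : ℂ) ∈ Metric.sphere a δ := by
        have := hp1.2
        rw [hcla] at this
        rcases lt_or_eq_of_le (mem_closedBall.mp this) with h | h
        · exact absurd (mem_ball.mpr h) hzna
        · exact mem_sphere.mpr h
      exact hz (hAV hzs)
    · exact absurd (Set.mem_inter hp1.2 hp2.2) (by rw [hdisj]; exact notMem_empty _)
  obtain ⟨xa, hxaP, hxas⟩ := ha
  obtain ⟨xb, hxbP, hxbs⟩ := hb
  have hxaK : xa ∈ K := hSaK ⟨hxaP, hxas⟩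
  have hxbK : xb ∈ K := hSbK ⟨hxbP, hxbs⟩
  have hxaF1 : xa ∈ F₁ := Or.inl ⟨⟨xa, hxaK⟩, hAV hxas, rfl⟩
  have hxbF2 : xb ∈ F₂ := by
    refine Or.inl ⟨⟨xb, hxbK⟩, ?_, rfl⟩
    intro hv
    have : (⟨xb, hxbK⟩ : K) ∈ V ∩ B' := ⟨hv, hxbs⟩
    rw [hVB] at this
    exact this
  have hxaNF2 : xa ∉ F₂ := fun h => by
    have : xa ∈ P ∩ (F₁ ∩ F₂) := ⟨hxaP, hxaF1, h⟩
    rw [hdisjF] at this; exact this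
  have hxbNF1 : xb ∉ F₁ := fun h => by
    have : xb ∈ P ∩ (F₁ ∩ F₂) := ⟨hxbP, h, hxbF2⟩
    rw [hdisjF] at this; exact this
  have hpre := hPc.isPreconnected F₂ᶜ F₁ᶜ hF2closed.isOpen_compl hF1closed.isOpen_compl
    (fun p hp => by
      rcases em (p ∈ F₂) with h | h
      · right
        intro h1
        have : p ∈ P ∩ (F₁ ∩ F₂) := ⟨hp, h1, h⟩
        rw [hdisjF] at this; exact this
      · exact Or.inl h)
    ⟨xa, hxaP, hxaNF2⟩ ⟨xb, hxbP, hxbNF1⟩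
  obtain ⟨p, hpP, hp2, hp1⟩ := hpre
  rcases hPcover hpP with h | h
  · exact hp1 h
  · exact hp2 h
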